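/- Let S ⊆ V and suppose its complement S^c is Λ-removable for some Λ > 0, i.e. Λ‖x‖₂ ≤ ‖Lx‖₂ for every x ∈ ℝ^N supported in S^c. Then for every ω with 0 < ω < Λ, the set S is a uniqueness set for PW_ω(G): if x, y ∈ PW_ω(G) satisfy x(v) = y(v) for all v ∈ S, then x = y. -/

import Mathlib

open Finset Matrix

/-- Pesenson (Theorem 5.1): if the complement `Sᶜ` of a set `S` of vertices is `Λ`-removable
for some `Λ > 0`, then `S` is a uniqueness set for the Paley–Wiener space `PW_ω(G)`
whenever `0 < ω < Λ`. -/
theorem stmt_0 {N : ℕ} (hN : 2 ≤ N)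
    (W : Matrix (Fin N) (Fin N) ℝ)
    (hWsymm : W.IsSymm)
    (hWnonneg : ∀ u v, 0 ≤ W u v)
    (hWdiag : ∀ u, W u u = 0)
    (L : Matrix (Fin N) (Fin N) ℝ)
    (hL : L = Matrix.diagonal (fun u => ∑ v, W u v) - W)
    (μ : Fin N → ℝ) (U : Matrix (Fin N) (Fin N) ℝ)
    (hU : Uᵀ * U = 1)
    (hμmono : Monotone μ)
    (hμ0 : μ (⟨0, by omega⟩ : Fin N) = 0)
    (heig : ∀ ℓ, L.mulVec (fun i => U i ℓ) = μ ℓ • (fun i => U i ℓ))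
    (S : Finset (Fin N)) (Λ : ℝ) (hΛ : 0 < Λ)
    (hrem : ∀ x : Fin N → ℝ, (∀ v ∈ S, x v = 0) →
      Λ * Real.sqrt (∑ v, x v ^ 2) ≤ Real.sqrt (∑ v, (L.mulVec x) v ^ 2))
    (ω : ℝ) (hω0 : 0 < ω) (hωΛ : ω < Λ)
    (x y : Fin N → ℝ)
    (hx : x ∈ Submodule.span ℝ {u : Fin N → ℝ | ∃ ℓ, μ ℓ ≤ ω ∧ u = fun i => U i ℓ})
    (hy : y ∈ Submodule.span ℝ {u : Fin N → ℝ | ∃ ℓ, μ ℓ ≤ ω ∧ u = fun i => U i ℓ})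
    (hagree : ∀ v ∈ S, x v = y v) :
    x = y := by

  have hNpos : 0 < N := by omega
  set z : Fin N → ℝ := x - y with hzdef
  suffices hz0 : z = 0 by
    funext i
    have := congrFun hz0 i
    simpa [hzdef, sub_eq_zero] using this
  have hzspan : z ∈ Submodule.span ℝ {u : Fin N → ℝ | ∃ ℓ, μ ℓ ≤ ω ∧ u = fun i => U i ℓ} :=
    Submodule.sub_mem _ hx hy
  have hzS : ∀ v ∈ S, z v = 0 := fun v hv => by
    simp [hzdef, hagree v hv]
  have hUU : U * Uᵀ = 1 := mul_eq_one_comm.mp hU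
  set c : Fin N → ℝ := Uᵀ.mulVec z with hcdef
  have hzc : z = U.mulVec c := by
    rw [hcdef, Matrix.mulVec_mulVec, hUU, Matrix.one_mulVec]
  -- coefficients vanish for high frequencies
  have hcgen : ∀ w ∈ Submodule.span ℝ {u : Fin N → ℝ | ∃ ℓ, μ ℓ ≤ ω ∧ u = fun i => U i ℓ},
      ∀ ℓ, ω < μ ℓ → (Uᵀ.mulVec w) ℓ = 0 := by
    intro w hw ℓ hℓ
    induction hw using Submodule.span_induction with
      | mem w hw =>
        obtain ⟨k, hk, rfl⟩ := hw
        have hne : ℓ ≠ k := by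
          intro h; subst h; exact absurd hk (not_le.mpr hℓ)
        have : (Uᵀ * U) ℓ k = (Uᵀ.mulVec fun i => U i k) ℓ := by
          simp [Matrix.mul_apply, Matrix.mulVec, dotProduct]
        rw [← this, hU, Matrix.one_apply_ne hne]
      | zero => simp
      | add w₁ w₂ _ _ h1 h2 => rw [Matrix.mulVec_add]; simp [h1, h2]
      | smul a w _ h => rw [Matrix.mulVec_smul]; simp [h]
  have hczero : ∀ ℓ, ω < μ ℓ → c ℓ = 0 := fun ℓ hℓ => hcgen z hzspan ℓ hℓ
  -- L * U = U * diagonal μ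
  have hLU : L * U = U * Matrix.diagonal μ := by
    ext i ℓ
    have h := congrFun (heig ℓ) i
    simp only [Matrix.mulVec, dotProduct, Pi.smul_apply, smul_eq_mul] at h
    rw [Matrix.mul_apply, Matrix.mul_diagonal]
    rw [h]; ring
  have hdiagc : Matrix.diagonal μ *ᵥ c = fun ℓ => μ ℓ * c ℓ :=
    funext fun ℓ => Matrix.mulVec_diagonal μ c ℓ
  have hLz : L.mulVec z = U.mulVec (fun ℓ => μ ℓ * c ℓ) := by
    rw [hzc, Matrix.mulVec_mulVec, hLU, ← Matrix.mulVec_mulVec, hdiagc]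
  -- isometry
  have key : ∀ d : Fin N → ℝ, ∑ v, (U.mulVec d v) ^ 2 = ∑ ℓ, d ℓ ^ 2 := by
    intro d
    have h1 : (U.mulVec d) ⬝ᵥ (U.mulVec d) = d ⬝ᵥ d := by
      rw [Matrix.dotProduct_mulVec]
      have : Matrix.vecMul (U.mulVec d) U = d := by
        rw [← Matrix.mulVec_transpose, Matrix.mulVec_mulVec, hU, Matrix.one_mulVec]
      rw [this]
    simpa [dotProduct, pow_two] using h1
  -- nonnegativity of eigenvalues
  have hμnonneg : ∀ ℓ, 0 ≤ μ ℓ := by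
    intro ℓ
    have : (⟨0, by omega⟩ : Fin N) ≤ ℓ := by
      simp [Fin.le_def]
    calc (0:ℝ) = μ ⟨0, by omega⟩ := hμ0.symm
      _ ≤ μ ℓ := hμmono this
  -- norms
  have hA : ∑ v, z v ^ 2 = ∑ ℓ, c ℓ ^ 2 := by
    rw [hzc]; exact key c
  have hB : ∑ v, (L.mulVec z) v ^ 2 = ∑ ℓ, (μ ℓ * c ℓ) ^ 2 := by
    rw [hLz]; exact key _
  have hbound : ∑ ℓ, (μ ℓ * c ℓ) ^ 2 ≤ ω ^ 2 * ∑ ℓ, c ℓ ^ 2 := by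
    rw [Finset.mul_sum]
    apply Finset.sum_le_sum
    intro ℓ _
    by_cases hℓ : μ ℓ ≤ ω
    · have h1 : (μ ℓ) ^ 2 ≤ ω ^ 2 := by
        apply pow_le_pow_left₀ (hμnonneg ℓ) hℓ 2
      calc (μ ℓ * c ℓ) ^ 2 = (μ ℓ) ^ 2 * c ℓ ^ 2 := by ring
        _ ≤ ω ^ 2 * c ℓ ^ 2 := by
            apply mul_le_mul_of_nonneg_right h1 (sq_nonneg _)
    · rw [hczero ℓ (not_le.mp hℓ)]
      simp
  have hcnn : (0:ℝ) ≤ ∑ ℓ, c ℓ ^ 2 := Finset.sum_nonneg fun _ _ => sq_nonneg _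
  have hrem' := hrem z hzS
  rw [hA, hB] at hrem'
  have hsq : Real.sqrt (∑ ℓ, (μ ℓ * c ℓ) ^ 2) ≤ ω * Real.sqrt (∑ ℓ, c ℓ ^ 2) := by
    have := Real.sqrt_le_sqrt hbound
    rwa [Real.sqrt_mul (sq_nonneg ω), Real.sqrt_sq hω0.le] at this
  have hfinal : Λ * Real.sqrt (∑ ℓ, c ℓ ^ 2) ≤ ω * Real.sqrt (∑ ℓ, c ℓ ^ 2) :=
    hrem'.trans hsq
  have hs0 : Real.sqrt (∑ ℓ, c ℓ ^ 2) = 0 := by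
    by_contra h
    have hpos : 0 < Real.sqrt (∑ ℓ, c ℓ ^ 2) :=
      lt_of_le_of_ne (Real.sqrt_nonneg _) (Ne.symm h)
    have := le_of_mul_le_mul_right hfinal hpos
    linarith
  have hsum0 : ∑ ℓ, c ℓ ^ 2 = 0 := by
    have := Real.sqrt_eq_zero hcnn |>.mp hs0
    exact this
  have hzsum0 : ∑ v, z v ^ 2 = 0 := by rw [hA]; exact hsum0
  funext v
  have : z v ^ 2 = 0 := by
    have := Finset.sum_eq_zero_iff_of_nonneg (fun i _ => sq_nonneg (z i)) |>.mp hzsum0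
    exact this v (Finset.mem_univ v)
  exact pow_eq_zero_iff (two_ne_zero) |>.mp this
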